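/- Exactness of the discrete biconjugate in one dimension with slope grid: let X^g = {x^1 < x^2 < ... < x^N} ⊂ ℝ and let J : X^g → ℝ be convex-extensible (i.e., the slopes s^i = (J(x^{i+1}) - J(x^i))/(x^{i+1} - x^i) are nondecreasing in i). Choose Y^g = {s^1, ..., s^{N-1}}. Then for every x ∈ [x^1, x^N], the discrete biconjugate J^{**dd}(x) = max_{y ∈ Y^g} min_{z ∈ X^g} { (x - z)·y + J(z) } equals the piecewise linear interpolation of J on X^g evaluated at x. -/

import Mathlib

private lemma chord_le_aux {N : ℕ} (x : Fin (N + 1) → ℝ) (J : ℝ → ℝ) (s : Fin N → ℝ)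
    (hstep : ∀ m : Fin N, J (x m.succ) - J (x m.castSucc) = s m * (x m.succ - x m.castSucc))
    (hx : ∀ m : Fin N, x m.castSucc ≤ x m.succ) (c : ℝ) :
    ∀ b : ℕ, ∀ hb : b < N + 1, ∀ a : ℕ, ∀ ha : a < N + 1, a ≤ b →
      (∀ m : Fin N, a ≤ (m : ℕ) → (m : ℕ) < b → s m ≤ c) →
      J (x ⟨b, hb⟩) - J (x ⟨a, ha⟩) ≤ c * (x ⟨b, hb⟩ - x ⟨a, ha⟩) := by
  intro b
  induction b with
  | zero =>
    intro hb a ha hab _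
    interval_cases a
    simp
  | succ b ih =>
    intro hb a ha hab hc
    rcases Nat.lt_or_ge a (b + 1) with h | h
    · have hab' : a ≤ b := Nat.lt_succ_iff.mp h
      have hbN : b < N := by omega
      have pb : b < N + 1 := by omega
      have h1 : J (x ⟨b + 1, hb⟩) - J (x ⟨b, pb⟩)
          = s ⟨b, hbN⟩ * (x ⟨b + 1, hb⟩ - x ⟨b, pb⟩) := hstep ⟨b, hbN⟩
      have h2 := ih pb a ha hab' (fun m' hm1 hm2 => hc m' hm1 (by omega))
      have h3 : s ⟨b, hbN⟩ ≤ c := hc ⟨b, hbN⟩ hab' (Nat.lt_succ_self b)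
      have h4 : x ⟨b, pb⟩ ≤ x ⟨b + 1, hb⟩ := hx ⟨b, hbN⟩
      nlinarith [mul_le_mul_of_nonneg_right h3 (sub_nonneg.mpr h4)]
    · have : a = b + 1 := by omega
      subst this
      simp
private lemma chord_ge_aux {N : ℕ} (x : Fin (N + 1) → ℝ) (J : ℝ → ℝ) (s : Fin N → ℝ)
    (hstep : ∀ m : Fin N, J (x m.succ) - J (x m.castSucc) = s m * (x m.succ - x m.castSucc))
    (hx : ∀ m : Fin N, x m.castSucc ≤ x m.succ) (c : ℝ) :
    ∀ b : ℕ, ∀ hb : b < N + 1, ∀ a : ℕ, ∀ ha : a < N + 1, a ≤ b →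
      (∀ m : Fin N, a ≤ (m : ℕ) → (m : ℕ) < b → c ≤ s m) →
      c * (x ⟨b, hb⟩ - x ⟨a, ha⟩) ≤ J (x ⟨b, hb⟩) - J (x ⟨a, ha⟩) := by
  intro b
  induction b with
  | zero =>
    intro hb a ha hab _
    interval_cases a
    simp
  | succ b ih =>
    intro hb a ha hab hc
    rcases Nat.lt_or_ge a (b + 1) with h | h
    · have hab' : a ≤ b := Nat.lt_succ_iff.mp h
      have hbN : b < N := by omega
      have pb : b < N + 1 := by omega
      have h1 : J (x ⟨b + 1, hb⟩) - J (x ⟨b, pb⟩)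
          = s ⟨b, hbN⟩ * (x ⟨b + 1, hb⟩ - x ⟨b, pb⟩) := hstep ⟨b, hbN⟩
      have h2 := ih pb a ha hab' (fun m' hm1 hm2 => hc m' hm1 (by omega))
      have h3 : c ≤ s ⟨b, hbN⟩ := hc ⟨b, hbN⟩ hab' (Nat.lt_succ_self b)
      have h4 : x ⟨b, pb⟩ ≤ x ⟨b + 1, hb⟩ := hx ⟨b, hbN⟩
      nlinarith [mul_le_mul_of_nonneg_right h3 (sub_nonneg.mpr h4)]
    · have : a = b + 1 := by omega
      subst this
      simp

/-- Exactness of the discrete biconjugate in one dimension with the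
slope grid: for a convex-extensible `J` on a strictly increasing grid `x : Fin (N+1) → ℝ`,
and `Yg` the set of consecutive slopes, the discrete biconjugate (in max-min form)
equals the piecewise linear interpolation of `J`: on every cell `[x_i, x_{i+1}]` it is
the affine function through `(x_i, J(x_i))` with slope `s_i`. -/
theorem discrete_biconjugate_exact_1d {N : ℕ} [NeZero N]
    (x : Fin (N + 1) → ℝ) (hmono : StrictMono x)
    (J : ℝ → ℝ)
    (s : Fin N → ℝ)
    (hs : ∀ i : Fin N,
      s i = (J (x i.succ) - J (x i.castSucc)) / (x i.succ - x i.castSucc))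
    -- convex-extensibility: the slopes are nondecreasing
    (hconvex : Monotone s)
    (i : Fin N) (t : ℝ) (ht : t ∈ Set.Icc (x i.castSucc) (x i.succ)) :
    Finset.univ.sup' Finset.univ_nonempty (fun k : Fin N =>
        Finset.univ.inf' Finset.univ_nonempty (fun j : Fin (N + 1) =>
          (t - x j) * s k + J (x j)))
      = J (x i.castSucc) + s i * (t - x i.castSucc) := by
  have hxlt : ∀ m : Fin N, x m.castSucc < x m.succ :=
    fun m => hmono (Fin.castSucc_lt_succ : m.castSucc < m.succ)
  have hx : ∀ m : Fin N, x m.castSucc ≤ x m.succ := fun m => (hxlt m).le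
  have hstep : ∀ m : Fin N,
      J (x m.succ) - J (x m.castSucc) = s m * (x m.succ - x m.castSucc) := by
    intro m
    rw [hs m, div_mul_cancel₀]
    exact sub_ne_zero.mpr (hxlt m).ne'
  apply le_antisymm
  · apply Finset.sup'_le
    intro k _
    rcases le_total k i with hki | hik
    · -- k ≤ i : evaluate at j = k.castSucc
      have hki' : (k : ℕ) ≤ (i : ℕ) := hki
      refine le_trans (Finset.inf'_le _ (Finset.mem_univ k.castSucc)) ?_
      have hch : s k * (x i.castSucc - x k.castSucc)
          ≤ J (x i.castSucc) - J (x k.castSucc) :=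
        chord_ge_aux x J s hstep hx (s k) (i : ℕ) (by omega) (k : ℕ) (by omega) hki'
          (fun m hm1 _ => hconvex (Fin.le_def.mpr hm1))
      have hski : s k ≤ s i := hconvex hki
      have hq : 0 ≤ (s i - s k) * (t - x i.castSucc) :=
        mul_nonneg (by linarith) (by linarith [ht.1])
      nlinarith [hch, hq]
    · -- i ≤ k : evaluate at j = k.succ
      have hik' : (i : ℕ) ≤ (k : ℕ) := hik
      refine le_trans (Finset.inf'_le _ (Finset.mem_univ k.succ)) ?_
      have hch : J (x k.succ) - J (x i.succ)
          ≤ s k * (x k.succ - x i.succ) :=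
        chord_le_aux x J s hstep hx (s k) ((k : ℕ) + 1) (by omega) ((i : ℕ) + 1) (by omega)
          (by omega) (fun m hm1 hm2 => hconvex (Fin.le_def.mpr (by omega)))
      have hsik : s i ≤ s k := hconvex hik
      have hq : 0 ≤ (s k - s i) * (x i.succ - t) :=
        mul_nonneg (by linarith) (by linarith [ht.2])
      have h1 := hstep i
      nlinarith [hch, hq, h1]
  · -- lower bound: take k = i
    refine le_trans ?_ (Finset.le_sup' _ (Finset.mem_univ i))
    apply Finset.le_inf'
    intro j _
    rcases le_total (j : ℕ) (i : ℕ) with hji | hij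
    · have hch : J (x i.castSucc) - J (x j)
          ≤ s i * (x i.castSucc - x j) :=
        chord_le_aux x J s hstep hx (s i) (i : ℕ) (by omega) (j : ℕ) (by omega) hji
          (fun m _ hm2 => hconvex (Fin.le_def.mpr (by omega)))
      linarith [hch]
    · have hch : s i * (x j - x i.castSucc)
          ≤ J (x j) - J (x i.castSucc) :=
        chord_ge_aux x J s hstep hx (s i) (j : ℕ) (by omega) (i : ℕ) (by omega) hij
          (fun m hm1 _ => hconvex (Fin.le_def.mpr hm1))
      linarith [hch]
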